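/- For every fixed r > 0, the function μ ↦ S_μ(r) is log-convex on (0,∞): for all μ₁, μ₂ > 0 and α ∈ [0,1], S_{αμ₁+(1−α)μ₂}(r) ≤ S_{μ₁}(r)^α · S_{μ₂}(r)^{1−α}. -/

import Mathlib

open Real

noncomputable def mathieuS (μ r : ℝ) : ℝ :=
  ∑' n : ℕ, (2 * ((n : ℝ) + 1)) / ((((n : ℝ) + 1) ^ 2 + r ^ 2) ^ (μ + 1))

noncomputable def zetaR (s : ℝ) : ℝ := ∑' n : ℕ, ((n : ℝ) + 1) ^ (-s)

open MeasureTheory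

-- term function
noncomputable def aTerm (μ r : ℝ) (n : ℕ) : ℝ :=
  (2 * ((n : ℝ) + 1)) / ((((n : ℝ) + 1) ^ 2 + r ^ 2) ^ (μ + 1))

lemma aTerm_nonneg (μ r : ℝ) (n : ℕ) : 0 ≤ aTerm μ r n := by
  apply div_nonneg (by positivity)
  apply Real.rpow_nonneg; positivity

lemma aTerm_summable (μ r : ℝ) (hμ : 0 < μ) : Summable (aTerm μ r) := by
  have key : ∀ n : ℕ, aTerm μ r n ≤ 2 * ((n:ℝ)+1) ^ (-(2*μ+1)) := by
    intro n
    have hb : (0:ℝ) < ((n:ℝ)+1)^2 := by positivity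
    have h1 : (((n:ℝ)+1)^2 : ℝ) ^ (μ+1) ≤ ((((n:ℝ)+1)^2 + r^2)) ^ (μ+1) := by
      apply Real.rpow_le_rpow (by positivity) (by nlinarith [sq_nonneg r]) (by linarith)
    have h2 : (((n:ℝ)+1)^2 : ℝ) ^ (μ+1) = ((n:ℝ)+1) ^ (2*(μ+1)) := by
      rw [← Real.rpow_natCast ((n:ℝ)+1) 2, ← Real.rpow_mul (by positivity)]
      norm_num
    have hpos : (0:ℝ) < ((n:ℝ)+1) ^ (2*(μ+1)) := Real.rpow_pos_of_pos (by positivity) _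
    calc aTerm μ r n ≤ (2 * ((n:ℝ)+1)) / (((n:ℝ)+1) ^ (2*(μ+1))) := by
          apply div_le_div_of_nonneg_left (by positivity) hpos
          rw [← h2]; exact h1
      _ = 2 * ((n:ℝ)+1) ^ (-(2*μ+1)) := by
          have hx : (0:ℝ) < (n:ℝ)+1 := by positivity
          rw [mul_div_assoc, Real.rpow_neg hx.le]
          congr 1
          rw [show 2*(μ+1) = 1 + (2*μ+1) by ring, Real.rpow_add hx, Real.rpow_one]
          field_simp
  have hs : Summable (fun n : ℕ => 2 * ((n:ℝ)+1) ^ (-(2*μ+1))) := by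
    apply Summable.mul_left
    have : Summable (fun n : ℕ => ((n:ℝ)) ^ (-(2*μ+1))) :=
      (Real.summable_nat_rpow).2 (by linarith)
    have := (summable_nat_add_iff 1).2 this
    simpa using this
  exact Summable.of_nonneg_of_le (aTerm_nonneg μ r) key hs

lemma aTerm_interp (μ₁ μ₂ α r : ℝ) (n : ℕ) :
    aTerm (α*μ₁+(1-α)*μ₂) r n = aTerm μ₁ r n ^ α * aTerm μ₂ r n ^ (1-α) := by
  unfold aTerm
  set b := ((n:ℝ)+1)^2 + r^2 with hbdef
  have hb : 0 < b := by positivity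
  have hc : (0:ℝ) < 2*((n:ℝ)+1) := by positivity
  rw [Real.div_rpow hc.le (Real.rpow_nonneg hb.le _),
      Real.div_rpow hc.le (Real.rpow_nonneg hb.le _),
      ← Real.rpow_mul hb.le, ← Real.rpow_mul hb.le, div_mul_div_comm,
      ← Real.rpow_add hc, ← Real.rpow_add hb]
  have e1 : α + (1-α) = 1 := by ring
  have e2 : (μ₁+1)*α + (μ₂+1)*(1-α) = (α*μ₁+(1-α)*μ₂)+1 := by ring
  rw [e1, e2, Real.rpow_one]

lemma mathieuS_nonneg (μ r : ℝ) : 0 ≤ (∑' n, aTerm μ r n) :=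
  tsum_nonneg (aTerm_nonneg μ r)

theorem stmt2 (r : ℝ) (hr : 0 < r) (μ₁ μ₂ α : ℝ) (h₁ : 0 < μ₁) (h₂ : 0 < μ₂)
    (hα : α ∈ Set.Icc (0 : ℝ) 1) :
    mathieuS (α * μ₁ + (1 - α) * μ₂) r ≤ mathieuS μ₁ r ^ α * mathieuS μ₂ r ^ (1 - α) := by
  obtain ⟨hα0, hα1⟩ := hα
  have hSdef : ∀ μ, mathieuS μ r = ∑' n, aTerm μ r n := fun μ => rfl
  have hSnn : ∀ μ, 0 ≤ mathieuS μ r := fun μ => (hSdef μ) ▸ mathieuS_nonneg μ r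
  rcases eq_or_lt_of_le hα0 with h0 | h0
  · rw [← h0]; norm_num [Real.rpow_zero, Real.rpow_one]
  rcases eq_or_lt_of_le hα1 with h1 | h1
  · rw [h1]; norm_num [Real.rpow_zero, Real.rpow_one]
  -- main case 0 < α < 1
  have hmid : 0 < α * μ₁ + (1-α) * μ₂ := by nlinarith
  have hofS : ∀ μ, 0 < μ → ENNReal.ofReal (mathieuS μ r) = ∑' n, ENNReal.ofReal (aTerm μ r n) := by
    intro μ hμ
    rw [hSdef]
    exact ENNReal.ofReal_tsum_of_nonneg (aTerm_nonneg μ r) (aTerm_summable μ r hμ)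
  have hpq : Real.HolderConjugate (1/α) (1/(1-α)) := by
    rw [Real.holderConjugate_iff]
    constructor
    · exact one_lt_one_div h0 h1
    · rw [one_div, one_div, inv_inv, inv_inv]; ring
  have holder := ENNReal.lintegral_mul_le_Lp_mul_Lq (MeasureTheory.Measure.count : Measure ℕ) hpq
      (f := fun n => (ENNReal.ofReal (aTerm μ₁ r n)) ^ α)
      (g := fun n => (ENNReal.ofReal (aTerm μ₂ r n)) ^ (1-α))
      (measurable_of_countable _).aemeasurable (measurable_of_countable _).aemeasurable
  simp only [MeasureTheory.lintegral_count] at holder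
  have hfp : ∀ n, ((ENNReal.ofReal (aTerm μ₁ r n)) ^ α) ^ (1/α) = ENNReal.ofReal (aTerm μ₁ r n) := by
    intro n
    rw [← ENNReal.rpow_mul, mul_one_div_cancel h0.ne', ENNReal.rpow_one]
  have hgq : ∀ n, ((ENNReal.ofReal (aTerm μ₂ r n)) ^ (1-α)) ^ (1/(1-α)) = ENNReal.ofReal (aTerm μ₂ r n) := by
    intro n
    rw [← ENNReal.rpow_mul, mul_one_div_cancel (by linarith : (1:ℝ)-α ≠ 0), ENNReal.rpow_one]
  simp only [hfp, hgq, one_div_one_div] at holder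
  have hterm : ∀ n : ℕ, (ENNReal.ofReal (aTerm μ₁ r n)) ^ α * (ENNReal.ofReal (aTerm μ₂ r n)) ^ (1-α)
      = ENNReal.ofReal (aTerm (α*μ₁+(1-α)*μ₂) r n) := by
    intro n
    rw [aTerm_interp, ENNReal.ofReal_mul (Real.rpow_nonneg (aTerm_nonneg _ _ _) _),
        ENNReal.ofReal_rpow_of_nonneg (aTerm_nonneg _ _ _) h0.le,
        ENNReal.ofReal_rpow_of_nonneg (aTerm_nonneg _ _ _) (by linarith)]
  simp only [Pi.mul_apply, hterm] at holder
  rw [← hofS _ hmid, ← hofS _ h₁, ← hofS _ h₂] at holder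
  rw [ENNReal.ofReal_rpow_of_nonneg (hSnn μ₁) h0.le,
      ENNReal.ofReal_rpow_of_nonneg (hSnn μ₂) (by linarith : (0:ℝ) ≤ 1-α),
      ← ENNReal.ofReal_mul (Real.rpow_nonneg (hSnn μ₁) _)] at holder
  exact (ENNReal.ofReal_le_ofReal_iff
    (mul_nonneg (Real.rpow_nonneg (hSnn μ₁) _) (Real.rpow_nonneg (hSnn μ₂) _))).1 holder
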